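/- arXiv:2505.14856 — 4 statements merged into one kernel-verified Lean document; each statement's English description precedes it below -/
import Mathlib

section
/- Let M > 0, L > 0 and let E be a real number with -M²/(2L) < E < 0, and let r₋ = (-M + √(M² + 2EL))/(2E) and r₊ = (-M - √(M² + 2EL))/(2E) be the turning points, so 0 < r₋ < r₊ and Ψ⁰_L(r_±) = E. Then the function r ↦ (2E - 2Ψ⁰_L(r))^{-1/2} is integrable on the interval (r₋, r₊), and the period integral satisfies 2∫_{r₋}^{r₊} (2E - 2Ψ⁰_L(r))^{-1/2} dr = (π/√2)·M·(-E)^{-3/2}. -/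
open MeasureTheory Set

set_option maxHeartbeats 1000000 in
/-- For the Kepler effective potential `Ψ⁰_L(r) = -M/r + L/(2r²)` and
`-M²/(2L) < E < 0`, with turning points `r₋ < r₊`, the function
`r ↦ (2E - 2Ψ⁰_L(r))^{-1/2}` is integrable on `(r₋, r₊)` and the period integral
satisfies `2∫_{r₋}^{r₊} (2E - 2Ψ⁰_L(r))^{-1/2} dr = (π/√2)·M·(-E)^{-3/2}`. -/
theorem kepler_period_integral (M L E : ℝ) (hM : 0 < M) (hL : 0 < L)
    (hE₁ : -M ^ 2 / (2 * L) < E) (hE₂ : E < 0) :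
    let Ψ : ℝ → ℝ := fun r => -M / r + L / (2 * r ^ 2)
    let rm : ℝ := (-M + Real.sqrt (M ^ 2 + 2 * E * L)) / (2 * E)
    let rp : ℝ := (-M - Real.sqrt (M ^ 2 + 2 * E * L)) / (2 * E)
    IntegrableOn (fun r => (2 * E - 2 * Ψ r) ^ (-(1 / 2) : ℝ)) (Set.Ioo rm rp) volume ∧
    2 * ∫ r in Set.Ioo rm rp, (2 * E - 2 * Ψ r) ^ (-(1 / 2) : ℝ) =
      Real.pi / Real.sqrt 2 * M * (-E) ^ (-(3 / 2) : ℝ) := by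
  intro Ψ rm rp
  have hE' : 0 < -E := by linarith
  have hEne : E ≠ 0 := ne_of_lt hE₂
  have hD : 0 < M ^ 2 + 2 * E * L := by
    have h : -M ^ 2 < E * (2 * L) := (div_lt_iff₀ (by positivity)).1 hE₁
    nlinarith
  have hs : 0 < Real.sqrt (M ^ 2 + 2 * E * L) := Real.sqrt_pos.2 hD
  set s := Real.sqrt (M ^ 2 + 2 * E * L) with hs_def
  have hs2 : s ^ 2 = M ^ 2 + 2 * E * L := Real.sq_sqrt hD.le
  have hsM : s < M := by nlinarith
  have hrm_def : rm = (-M + s) / (2 * E) := rfl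
  have hrp_def : rp = (-M - s) / (2 * E) := rfl
  have hΨ_def : ∀ r : ℝ, Ψ r = -M / r + L / (2 * r ^ 2) := fun _ => rfl
  clear_value rm rp s
  have hrm_pos : 0 < rm := by
    rw [hrm_def, div_pos_iff]; right; constructor <;> linarith
  have hrmrp : rm < rp := by
    have h1 : rp - rm = s / (-E) := by rw [hrm_def, hrp_def]; field_simp; ring
    have := div_pos hs hE'
    linarith
  set c := (rm + rp) / 2 with hc_def
  set d := (rp - rm) / 2 with hd_def
  have hd_pos : 0 < d := by rw [hd_def]; linarith
  have hrm_cd : rm = c - d := by rw [hc_def, hd_def]; ring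
  have hrp_cd : rp = c + d := by rw [hc_def, hd_def]; ring
  have hc_val : c = M / (2 * -E) := by
    rw [hc_def, hrm_def, hrp_def]; field_simp; ring
  have h1 : E * (rm + rp) = -M := by rw [hrm_def, hrp_def]; field_simp; ring
  have h2 : (2 * E) * (rm * rp) = -L := by
    rw [hrm_def, hrp_def]; field_simp; nlinarith [hs2]
  -- Key algebraic identity
  have key : ∀ r : ℝ, 0 < r →
      2 * E - 2 * Ψ r = (-(2 * E)) * ((r - rm) * (rp - r)) / r ^ 2 := by
    intro r hr
    rw [hΨ_def]
    field_simp
    linear_combination 2*r*h1 - h2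
  -- the substitution r = c + d sin θ
  set F : ℝ → ℝ := fun θ => c + d * Real.sin θ with hF_def
  have pi_pos := Real.pi_pos
  have hIoo : MeasurableSet (Ioo (-(Real.pi / 2)) (Real.pi / 2)) := measurableSet_Ioo
  have hF' : ∀ θ ∈ Ioo (-(Real.pi / 2)) (Real.pi / 2),
      HasDerivWithinAt F (d * Real.cos θ) (Ioo (-(Real.pi / 2)) (Real.pi / 2)) θ := by
    intro θ _
    exact (((Real.hasDerivAt_sin θ).const_mul d).const_add c).hasDerivWithinAt
  have hinj : InjOn F (Ioo (-(Real.pi / 2)) (Real.pi / 2)) := by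
    intro a ha b hb hab
    have hs := Real.injOn_sin (Ioo_subset_Icc_self ha) (Ioo_subset_Icc_self hb)
    apply hs
    have : d * Real.sin a = d * Real.sin b := by
      have := hab; simp only [hF_def] at this; linarith
    exact mul_left_cancel₀ hd_pos.ne' this
  have himage : F '' Ioo (-(Real.pi / 2)) (Real.pi / 2) = Ioo rm rp := by
    ext y
    simp only [mem_image, mem_Ioo]
    constructor
    · rintro ⟨θ, ⟨ht1, ht2⟩, rfl⟩
      have hmem : θ ∈ Icc (-(Real.pi / 2)) (Real.pi / 2) := ⟨ht1.le, ht2.le⟩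
      have hlt : Real.sin θ < 1 := by
        have := Real.strictMonoOn_sin hmem (right_mem_Icc.2 (by linarith)) ht2
        simpa using this
      have hgt : -1 < Real.sin θ := by
        have := Real.strictMonoOn_sin (left_mem_Icc.2 (by linarith)) hmem ht1
        simpa using this
      constructor
      · rw [hrm_cd]; simp only [hF_def]; nlinarith
      · rw [hrp_cd]; simp only [hF_def]; nlinarith
    · rintro ⟨hy1, hy2⟩
      have hx1 : -1 < (y - c) / d := by
        rw [lt_div_iff₀ hd_pos]; rw [hrm_cd] at hy1; linarith
      have hx2 : (y - c) / d < 1 := by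
        rw [div_lt_iff₀ hd_pos]; rw [hrp_cd] at hy2; linarith
      refine ⟨Real.arcsin ((y - c) / d),
        ⟨Real.neg_pi_div_two_lt_arcsin.2 hx1, Real.arcsin_lt_pi_div_two.2 hx2⟩, ?_⟩
      simp only [hF_def]
      rw [Real.sin_arcsin hx1.le hx2.le]
      field_simp
      ring
  -- pointwise identification of the transformed integrand
  have hpt : ∀ θ ∈ Ioo (-(Real.pi / 2)) (Real.pi / 2),
      |d * Real.cos θ| • (fun r => (2 * E - 2 * Ψ r) ^ (-(1 / 2) : ℝ)) (F θ)
        = (c + d * Real.sin θ) / Real.sqrt (-(2 * E)) := by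
    intro θ hθ
    have hcos : 0 < Real.cos θ := Real.cos_pos_of_mem_Ioo hθ
    have hsin : -1 ≤ Real.sin θ := Real.neg_one_le_sin θ
    have hFpos : 0 < F θ := by
      simp only [hF_def]
      have : c - d ≤ c + d * Real.sin θ := by nlinarith
      rw [hrm_cd] at hrm_pos; linarith
    have hval := key (F θ) hFpos
    have hfac : (F θ - rm) * (rp - F θ) = (d * Real.cos θ) ^ 2 := by
      simp only [hF_def]
      rw [hrm_cd, hrp_cd]
      have h := Real.sin_sq_add_cos_sq θ
      linear_combination (-(d^2)) * h
    beta_reduce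
    rw [hval, hfac]
    have hA : 0 < -(2 * E) := by linarith
    have hx : (0:ℝ) < -(2 * E) * (d * Real.cos θ) ^ 2 / F θ ^ 2 := by positivity
    rw [Real.rpow_neg hx.le, ← Real.sqrt_eq_rpow]
    have hsA : 0 < Real.sqrt (-(2 * E)) := Real.sqrt_pos.2 hA
    have e1 : (Real.sqrt (-(2 * E)) * (d * Real.cos θ) / F θ) ^ 2
        = -(2 * E) * (d * Real.cos θ) ^ 2 / F θ ^ 2 := by
      rw [div_pow, mul_pow, Real.sq_sqrt hA.le]
    have hsq : Real.sqrt (-(2 * E) * (d * Real.cos θ) ^ 2 / F θ ^ 2)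
        = Real.sqrt (-(2 * E)) * (d * Real.cos θ) / F θ := by
      rw [← e1]
      exact Real.sqrt_sq (by positivity)
    rw [hsq]
    have hFθ : F θ = c + d * Real.sin θ := rfl
    rw [smul_eq_mul, abs_of_pos (by positivity), ← hFθ, inv_div]
    field_simp
  -- integrability and value of the transformed integral
  have hcont : Continuous fun θ : ℝ => (c + d * Real.sin θ) / Real.sqrt (-(2 * E)) :=
    (continuous_const.add (continuous_const.mul Real.continuous_sin)).div_const _
  have hImInt : IntegrableOn (fun θ => (c + d * Real.sin θ) / Real.sqrt (-(2 * E)))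
      (Ioo (-(Real.pi / 2)) (Real.pi / 2)) volume :=
    (hcont.integrableOn_Icc).mono_set Ioo_subset_Icc_self
  have hIntegrable : IntegrableOn (fun r => (2 * E - 2 * Ψ r) ^ (-(1 / 2) : ℝ))
      (Ioo rm rp) volume := by
    rw [← himage,
      integrableOn_image_iff_integrableOn_abs_deriv_smul hIoo hF' hinj]
    exact hImInt.congr_fun (fun θ hθ => (hpt θ hθ).symm) hIoo
  refine ⟨hIntegrable, ?_⟩
  have hIeq : (∫ r in Ioo rm rp, (2 * E - 2 * Ψ r) ^ (-(1 / 2) : ℝ))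
      = ∫ θ in Ioo (-(Real.pi / 2)) (Real.pi / 2),
          (c + d * Real.sin θ) / Real.sqrt (-(2 * E)) := by
    rw [← himage, integral_image_eq_integral_abs_deriv_smul hIoo hF' hinj]
    exact setIntegral_congr_fun hIoo hpt
  have hIval : (∫ θ in Ioo (-(Real.pi / 2)) (Real.pi / 2),
        (c + d * Real.sin θ) / Real.sqrt (-(2 * E)))
      = Real.pi * c / Real.sqrt (-(2 * E)) := by
    rw [← integral_Ioc_eq_integral_Ioo,
      ← intervalIntegral.integral_of_le (by linarith : -(Real.pi / 2) ≤ Real.pi / 2),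
      intervalIntegral.integral_div,
      intervalIntegral.integral_add intervalIntegrable_const
        ((by fun_prop : Continuous fun x => d * Real.sin x).intervalIntegrable _ _),
      intervalIntegral.integral_const_mul, integral_sin,
      intervalIntegral.integral_const]
    norm_num [Real.cos_pi_div_two, Real.cos_neg]
  rw [hIeq, hIval]
  have h32 : (-E) ^ (-(3 / 2) : ℝ) = ((-E) * Real.sqrt (-E))⁻¹ := by
    rw [Real.rpow_neg hE'.le]
    congr 1
    rw [show (3 / 2 : ℝ) = 1 + 1 / 2 by norm_num, Real.rpow_add hE', Real.rpow_one,
      ← Real.sqrt_eq_rpow]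
  have hsplit : Real.sqrt (-(2 * E)) = Real.sqrt 2 * Real.sqrt (-E) := by
    rw [show -(2 * E) = 2 * -E by ring, Real.sqrt_mul (by norm_num : (0:ℝ) ≤ 2)]
  have hs2' : (0:ℝ) < Real.sqrt 2 := by positivity
  have hsE : 0 < Real.sqrt (-E) := Real.sqrt_pos.2 hE'
  rw [hsplit, h32, hc_val]
  field_simp
end

section
/- Let 0 < ω_min ≤ ω_max, let μ > 0, and let γ ∈ [0,1]. Then there exists C > 0 such that for every nonzero integer m, every real λ with |λ| ≥ 2πω_min, every real ε ≥ 0, and every x ∈ [ω_min, ω_max] satisfying |x + λ/(2πm)| ≥ μω_min, one has |1/(x + (λ + iε)/(2πm)) - 1/(x + (λ - iε)/(2πm))| ≤ C·(ε/|m|)·(|m|/|λ|)^{2γ}. -/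
set_option maxHeartbeats 1000000 in
/-- Non-resonant bound on the difference of the two boundary values of
the resolvent: for `0 < ω_min ≤ ω_max`, `μ > 0`, `γ ∈ [0,1]`, there is `C > 0` such
that for all nonzero `m`, all `λ` with `|λ| ≥ 2πω_min`, all `ε ≥ 0`, and all
`x ∈ [ω_min, ω_max]` with `|x + λ/(2πm)| ≥ μω_min`,
`|1/(x + (λ+iε)/(2πm)) - 1/(x + (λ-iε)/(2πm))| ≤ C·(ε/|m|)·(|m|/|λ|)^{2γ}`. -/
theorem nonresonant_difference_bound (ωmin ωmax : ℝ) (h0 : 0 < ωmin) (h1 : ωmin ≤ ωmax)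
    (μ : ℝ) (hμ : 0 < μ) (γ : ℝ) (hγ0 : 0 ≤ γ) (hγ1 : γ ≤ 1) :
    ∃ C > 0, ∀ m : ℤ, m ≠ 0 → ∀ lam : ℝ, 2 * Real.pi * ωmin ≤ |lam| →
      ∀ ε : ℝ, 0 ≤ ε → ∀ x ∈ Set.Icc ωmin ωmax,
        μ * ωmin ≤ |x + lam / (2 * Real.pi * (m : ℝ))| →
          ‖(1 / ((x : ℂ) + ((lam : ℂ) + Complex.I * (ε : ℂ)) / (2 * (Real.pi : ℂ) * (m : ℂ))) -
                1 / ((x : ℂ) + ((lam : ℂ) - Complex.I * (ε : ℂ)) / (2 * (Real.pi : ℂ) * (m : ℂ))))‖ ≤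
            C * (ε / |(m : ℝ)|) * (|(m : ℝ)| / |lam|) ^ (2 * γ) := by
  have hπ : (0:ℝ) < Real.pi := Real.pi_pos
  set c0 : ℝ := min (μ * ωmin / (2 * ωmax + 1)) (1/2) with hc0def
  have hωmax : 0 < ωmax := lt_of_lt_of_le h0 h1
  have hc0 : 0 < c0 := by
    apply lt_min
    · positivity
    · norm_num
  have hc0le : c0 ≤ μ * ωmin / (2 * ωmax + 1) := min_le_left _ _
  have hc0half : c0 ≤ 1/2 := min_le_right _ _
  clear_value c0
  refine ⟨4 * Real.pi / c0 ^ 2, by positivity, ?_⟩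
  intro m hm lam hlam ε hε x hx ha
  set mm : ℝ := |(m : ℝ)| with hmmdef
  have hmm : 0 < mm := by
    simpa [hmmdef] using abs_pos.mpr (show ((m:ℝ)) ≠ 0 by exact_mod_cast hm)
  have hmm1 : 1 ≤ mm := by
    have h' : (1:ℤ) ≤ |m| := Int.one_le_abs hm
    have h2 : ((1:ℤ):ℝ) ≤ ((|m|:ℤ):ℝ) := by exact_mod_cast h'
    rw [Int.cast_abs] at h2
    simpa [hmmdef] using h2
  clear_value mm
  set a : ℝ := x + lam / (2 * Real.pi * (m : ℝ)) with hadef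
  have haμ : μ * ωmin ≤ |a| := ha
  have hapos : 0 < |a| := lt_of_lt_of_le (by positivity) haμ
  clear_value a
  set t : ℝ := |lam| / (2 * Real.pi * mm) with htdef
  have ht0 : 0 < t := by
    have : 0 < |lam| := lt_of_lt_of_le (by positivity) hlam
    positivity
  -- |lam / (2πm)| = t
  have habs : |lam / (2 * Real.pi * (m:ℝ))| = t := by
    rw [htdef, abs_div, abs_mul, abs_mul]
    simp [abs_of_pos hπ, hmmdef]
  clear_value t
  -- lower bound |a| ≥ c0 * max 1 t
  have hkey : c0 * max 1 t ≤ |a| := by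
    rcases le_or_gt t (2 * ωmax + 1) with h | h
    · have hmax : max 1 t ≤ 2 * ωmax + 1 := max_le (by linarith) h
      have : c0 * max 1 t ≤ (μ * ωmin / (2 * ωmax + 1)) * (2 * ωmax + 1) := by
        apply mul_le_mul hc0le hmax (le_trans zero_le_one (le_max_left _ _)) (by positivity)
      rw [div_mul_cancel₀] at this
      · linarith
      · positivity
    · have hxb : |x| ≤ ωmax := by
        rw [abs_le]
        exact ⟨by linarith [hx.1], hx.2⟩
      have htri : t ≤ |a| + |x| := by
        have : |lam / (2 * Real.pi * (m:ℝ))| = |a - x| := by rw [hadef]; ring_nf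
        rw [habs] at this
        calc t = |a - x| := this
          _ ≤ |a| + |x| := abs_sub _ _
      have h2 : t / 2 ≤ |a| := by
        linarith
      have hmax : max 1 t = t := max_eq_right (by linarith)
      rw [hmax]
      nlinarith
  -- s = |lam| / mm
  set s : ℝ := |lam| / mm with hsdef
  have hs0 : 0 < s := by
    have : 0 < |lam| := lt_of_lt_of_le (by positivity) hlam
    positivity
  clear_value s
  have hst : s = 2 * Real.pi * t := by
    rw [hsdef, htdef]; field_simp
  -- central rpow estimate: s ^ (2γ) ≤ (4π/c0^2) * π * a^2
  have hmaxpos : (1:ℝ) ≤ max 1 t := le_max_left _ _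
  have hrp1 : t ^ (2*γ) ≤ (max 1 t) ^ (2*γ) :=
    Real.rpow_le_rpow (le_of_lt ht0) (le_max_right _ _) (by positivity)
  have hrp2 : (max 1 t) ^ (2*γ) ≤ (max 1 t) ^ (2:ℝ) :=
    Real.rpow_le_rpow_of_exponent_le hmaxpos (by linarith)
  have hrp3 : (max 1 t) ^ (2:ℝ) ≤ (|a|/c0) ^ (2:ℝ) := by
    apply Real.rpow_le_rpow (by linarith) _ (by norm_num)
    rw [le_div_iff₀ hc0]
    linarith [hkey, mul_comm c0 (max 1 t)]
  have hpi1 : (1:ℝ) ≤ 2 * Real.pi := by linarith [Real.pi_gt_three]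
  have hrp4 : (2*Real.pi) ^ (2*γ) ≤ (2*Real.pi) ^ (2:ℝ) :=
    Real.rpow_le_rpow_of_exponent_le hpi1 (by linarith)
  have hsplit : s ^ (2*γ) = (2*Real.pi) ^ (2*γ) * t ^ (2*γ) := by
    rw [hst, Real.mul_rpow (by positivity) (le_of_lt ht0)]
  have hsq : ∀ y : ℝ, 0 ≤ y → y ^ (2:ℝ) = y^2 := by
    intro y hy
    rw [show (2:ℝ) = ((2:ℕ):ℝ) by norm_num, Real.rpow_natCast]
  have hcentral : s ^ (2*γ) ≤ (4 * Real.pi / c0 ^ 2) * Real.pi * a ^ 2 := by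
    have h1' : s ^ (2*γ) ≤ (2*Real.pi) ^ (2:ℝ) * (|a|/c0) ^ (2:ℝ) := by
      rw [hsplit]
      exact mul_le_mul hrp4 (le_trans hrp1 (le_trans hrp2 hrp3)) (by positivity) (by positivity)
    rw [hsq _ (by positivity), hsq _ (by positivity)] at h1'
    have : (2*Real.pi)^2 * (|a|/c0)^2 = (4 * Real.pi / c0 ^ 2) * Real.pi * |a| ^ 2 := by
      ring
    rw [this, sq_abs] at h1'
    exact h1'
  -- complex side
  have hDR : (2 * Real.pi * (m:ℝ)) ≠ 0 := by
    have : ((m:ℝ)) ≠ 0 := by exact_mod_cast hm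
    positivity
  set D : ℂ := 2 * (Real.pi : ℂ) * (m : ℂ) with hDdef
  have hDne : D ≠ 0 := by
    rw [hDdef]
    exact_mod_cast hDR
  clear_value D
  obtain ⟨r, hrdef⟩ : ∃ r : ℝ, r = ε / (2 * Real.pi * (m:ℝ)) := ⟨_, rfl⟩
  set u : ℂ := (x : ℂ) + ((lam : ℂ) + Complex.I * (ε : ℂ)) / D with hudef
  set v : ℂ := (x : ℂ) + ((lam : ℂ) - Complex.I * (ε : ℂ)) / D with hvdef
  clear_value u v
  have hueq : u = (a : ℂ) + Complex.ofReal r * Complex.I := by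
    rw [hudef, hDdef, hadef, hrdef]
    push_cast
    field_simp
    ring
  have hveq : v = (a : ℂ) - Complex.ofReal r * Complex.I := by
    rw [hvdef, hDdef, hadef, hrdef]
    push_cast
    field_simp
    ring
  have hure : u.re = a := by rw [hueq]; simp
  have hvre : v.re = a := by rw [hveq]; simp
  have hau : |a| ≤ ‖u‖ := by
    have := Complex.abs_re_le_norm u
    rwa [hure] at this
  have hav : |a| ≤ ‖v‖ := by
    have := Complex.abs_re_le_norm v
    rwa [hvre] at this
  have hune : u ≠ 0 := by
    intro h; rw [h, norm_zero] at hau; linarith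
  have hvne : v ≠ 0 := by
    intro h; rw [h, norm_zero] at hav; linarith
  have hdiff : 1/u - 1/v = (v - u) / (u * v) := by
    rw [div_sub_div _ _ hune hvne, one_mul, mul_one]
  have hvu : v - u = -(2 * Complex.I * (ε:ℂ)) / D := by
    rw [hudef, hvdef]
    field_simp
    ring
  have habsD : ‖D‖ = 2 * Real.pi * mm := by
    rw [hDdef]
    simp [norm_mul, Complex.norm_real, abs_of_pos hπ, hmmdef]
  have habsvu : ‖v - u‖ = 2 * ε / (2 * Real.pi * mm) := by
    rw [hvu, norm_div, habsD]
    simp [norm_mul, Complex.norm_real, abs_of_nonneg hε]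
  have hbound1 : ‖1/u - 1/v‖ ≤ (2 * ε / (2 * Real.pi * mm)) / (|a| * |a|) := by
    rw [hdiff, norm_div, norm_mul, habsvu]
    have hle : |a| * |a| ≤ ‖u‖ * ‖v‖ :=
      mul_le_mul hau hav (le_of_lt hapos) (norm_nonneg u)
    have hden : (0:ℝ) < 2*Real.pi*mm := mul_pos (by positivity) hmm
    have hnum : (0:ℝ) ≤ 2*ε/(2*Real.pi*mm) := div_nonneg (by linarith) hden.le
    exact div_le_div_of_nonneg_left hnum (mul_pos hapos hapos) hle
  refine le_trans hbound1 ?_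
  -- final algebra
  have hrw : (mm / |lam|) ^ (2*γ) = (s ^ (2*γ))⁻¹ := by
    rw [hsdef, ← Real.inv_rpow (div_nonneg (abs_nonneg lam) hmm.le), inv_div]
  rw [hrw]
  have hP : 0 < s ^ (2*γ) := Real.rpow_pos_of_pos hs0 _
  have hLHS : 2*ε/(2*Real.pi*mm)/(|a| * |a|) = (2*ε) / (2*Real.pi*mm*(|a| * |a|)) := by
    rw [div_div]
  have hRHS : 4*Real.pi/c0^2*(ε/mm)*(s^(2*γ))⁻¹
      = (4*Real.pi/c0^2*ε) / (mm * s^(2*γ)) := by ring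
  have hd1 : (0:ℝ) < 2*Real.pi*mm*(|a| * |a|) :=
    mul_pos (mul_pos (by positivity) hmm) (mul_pos hapos hapos)
  have hd2 : (0:ℝ) < mm * s^(2*γ) := mul_pos hmm hP
  rw [hLHS, hRHS, div_le_div_iff₀ hd1 hd2]
  calc 2*ε*(mm * s^(2*γ)) = 2*ε*mm * s^(2*γ) := by ring
    _ ≤ 2*ε*mm * (4*Real.pi/c0^2*Real.pi*a^2) :=
        mul_le_mul_of_nonneg_left hcentral (by positivity)
    _ = 4*Real.pi/c0^2*ε*(2*Real.pi*mm*(|a| * |a|)) := by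
        rw [← sq_abs a]; ring
end

section
/- Let M > 0, let U : (0,∞) → ℝ be differentiable, define Ψ(L,R) = U(R) - M/R + L/(2R²), and let ω : ℝ² → ℝ be differentiable. Let O ⊆ (0,∞) × ℝ² be open and let E, L : O → ℝ be differentiable functions satisfying, for every (R,y,z) ∈ O, the constraints ω(E(R,y,z), L(R,y,z)) = y and E(R,y,z) - Ψ(L(R,y,z), R) = z. Assume also that the gradient (∂_Eω, ∂_Lω) of ω is nonzero at (E(R,y,z), L(R,y,z)) for every (R,y,z) ∈ O. Then for every differentiable F : ℝ² → ℝ and every (R,y,z) ∈ O, the partial derivatives of the composition G(R,y,z) := F(E(R,y,z), L(R,y,z)) satisfy ∂_R G(R,y,z) = ∂_RΨ(L(R,y,z), R) · ∂_z G(R,y,z), where ∂_RΨ(L,R) = U'(R) + M/R² - L/R³. -/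
/-- In the `(R,y,z)` coordinates determined by the constraints
`ω(E,L) = y` and `E - Ψ(L,R) = z`, with `Ψ(L,R) = U(R) - M/R + L/(2R²)` and
`∇ω ≠ 0`, any function `G(R,y,z) = F(E(R,y,z), L(R,y,z))` of the energy-momentum
variables alone satisfies `∂_R G = ∂_RΨ(L,R) · ∂_z G`, where
`∂_RΨ(L,R) = U'(R) + M/R² - L/R³`. -/
theorem dR_dz_derivatives_parallel (M : ℝ) (hM : 0 < M) (U U' : ℝ → ℝ)
    (hU : ∀ r > 0, HasDerivAt U (U' r) r)
    (ω : ℝ × ℝ → ℝ) (hω : Differentiable ℝ ω)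
    (O : Set (ℝ × ℝ × ℝ)) (hO : IsOpen O) (hpos : ∀ p ∈ O, 0 < p.1)
    (E L : ℝ × ℝ × ℝ → ℝ)
    (hE : ∀ p ∈ O, DifferentiableAt ℝ E p) (hL : ∀ p ∈ O, DifferentiableAt ℝ L p)
    (hc₁ : ∀ p ∈ O, ω (E p, L p) = p.2.1)
    (hc₂ : ∀ p ∈ O, E p - (U p.1 - M / p.1 + L p / (2 * p.1 ^ 2)) = p.2.2)
    (hgrad : ∀ p ∈ O, fderiv ℝ ω (E p, L p) ≠ 0) :
    ∀ F : ℝ × ℝ → ℝ, Differentiable ℝ F → ∀ p ∈ O,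
      fderiv ℝ (fun q => F (E q, L q)) p (1, 0, 0) =
        (U' p.1 + M / p.1 ^ 2 - L p / p.1 ^ 3) *
          fderiv ℝ (fun q => F (E q, L q)) p (0, 0, 1) := by
  intro F hF p hp
  have hR : 0 < p.1 := hpos p hp
  have hRne : p.1 ≠ 0 := hR.ne'
  set R := p.1 with hRdef
  have hEp := hE p hp
  have hLp := hL p hp
  set dE := fderiv ℝ E p with hdE
  set dL := fderiv ℝ L p with hdL
  have hEL : HasFDerivAt (fun q => (E q, L q)) (dE.prod dL) p :=
    hEp.hasFDerivAt.prodMk hLp.hasFDerivAt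
  -- chain rule for F
  have hFc : HasFDerivAt (fun q => F (E q, L q))
      ((fderiv ℝ F (E p, L p)).comp (dE.prod dL)) p :=
    (hF.differentiableAt.hasFDerivAt).comp p hEL
  -- chain rule for ω
  have hωc : HasFDerivAt (fun q => ω (E q, L q))
      ((fderiv ℝ ω (E p, L p)).comp (dE.prod dL)) p :=
    (hω.differentiableAt.hasFDerivAt).comp p hEL
  -- constraint 1
  have heq1 : (fun q => ω (E q, L q)) =ᶠ[nhds p] (fun q : ℝ × ℝ × ℝ => q.2.1) :=
    Filter.eventually_of_mem (hO.mem_nhds hp) hc₁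
  have h1 : HasFDerivAt (fun q : ℝ × ℝ × ℝ => q.2.1)
      ((fderiv ℝ ω (E p, L p)).comp (dE.prod dL)) p :=
    hωc.congr_of_eventuallyEq heq1.symm
  have h1' : HasFDerivAt (fun q : ℝ × ℝ × ℝ => q.2.1)
      ((ContinuousLinearMap.fst ℝ ℝ ℝ).comp (ContinuousLinearMap.snd ℝ ℝ (ℝ × ℝ))) p :=
    (hasFDerivAt_snd).fst
  have hD1 := h1.unique h1'
  -- derivative of the effective potential part
  have hU1 : HasFDerivAt (fun q : ℝ × ℝ × ℝ => U q.1)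
      (U' R • ContinuousLinearMap.fst ℝ ℝ (ℝ × ℝ)) p :=
    (hU R hR).comp_hasFDerivAt p hasFDerivAt_fst
  have hinv : HasDerivAt (fun r : ℝ => M / r) (-(M / R ^ 2)) R := by
    simpa [div_eq_mul_inv, mul_comm] using (hasDerivAt_inv hRne).const_mul M
  have hU2 : HasFDerivAt (fun q : ℝ × ℝ × ℝ => M / q.1)
      ((-(M / R ^ 2)) • ContinuousLinearMap.fst ℝ ℝ (ℝ × ℝ)) p :=
    hinv.comp_hasFDerivAt p hasFDerivAt_fst
  have hinv2 : HasDerivAt (fun r : ℝ => (2 * r ^ 2)⁻¹) (-(1 / R ^ 3)) R := by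
    have h0 : (2 * R ^ 2) ≠ 0 := by positivity
    have := (((hasDerivAt_pow 2 R).const_mul 2).inv h0)
    refine this.congr_deriv ?_
    field_simp
    ring
  have hinv2' : HasFDerivAt (fun q : ℝ × ℝ × ℝ => (2 * q.1 ^ 2)⁻¹)
      ((-(1 / R ^ 3)) • ContinuousLinearMap.fst ℝ ℝ (ℝ × ℝ)) p :=
    hinv2.comp_hasFDerivAt (f := Prod.fst) p hasFDerivAt_fst
  have hU3 : HasFDerivAt (fun q : ℝ × ℝ × ℝ => L q * (2 * q.1 ^ 2)⁻¹)
      (L p • ((-(1 / R ^ 3)) • ContinuousLinearMap.fst ℝ ℝ (ℝ × ℝ)) + (2 * R ^ 2)⁻¹ • dL) p :=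
    hLp.hasFDerivAt.mul hinv2'
  have hg : HasFDerivAt (fun q : ℝ × ℝ × ℝ => E q - (U q.1 - M / q.1 + L q / (2 * q.1 ^ 2)))
      (dE - ((U' R • ContinuousLinearMap.fst ℝ ℝ (ℝ × ℝ)
        - (-(M / R ^ 2)) • ContinuousLinearMap.fst ℝ ℝ (ℝ × ℝ))
        + (L p • ((-(1 / R ^ 3)) • ContinuousLinearMap.fst ℝ ℝ (ℝ × ℝ)) + (2 * R ^ 2)⁻¹ • dL))) p := by
    have := hEp.hasFDerivAt.sub (((hU1.sub hU2).add hU3))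
    simpa [div_eq_mul_inv, Pi.sub_def, Pi.add_def] using this
  have heq2 : (fun q : ℝ × ℝ × ℝ => E q - (U q.1 - M / q.1 + L q / (2 * q.1 ^ 2)))
      =ᶠ[nhds p] (fun q : ℝ × ℝ × ℝ => q.2.2) :=
    Filter.eventually_of_mem (hO.mem_nhds hp) hc₂
  have h2 : HasFDerivAt (fun q : ℝ × ℝ × ℝ => q.2.2)
      (dE - ((U' R • ContinuousLinearMap.fst ℝ ℝ (ℝ × ℝ)
        - (-(M / R ^ 2)) • ContinuousLinearMap.fst ℝ ℝ (ℝ × ℝ))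
        + (L p • ((-(1 / R ^ 3)) • ContinuousLinearMap.fst ℝ ℝ (ℝ × ℝ)) + (2 * R ^ 2)⁻¹ • dL))) p :=
    hg.congr_of_eventuallyEq heq2.symm
  have h2' : HasFDerivAt (fun q : ℝ × ℝ × ℝ => q.2.2)
      ((ContinuousLinearMap.snd ℝ ℝ ℝ).comp (ContinuousLinearMap.snd ℝ ℝ (ℝ × ℝ))) p :=
    (hasFDerivAt_snd).snd
  have hD2 := h2.unique h2'
  -- scalar notation
  set a := fderiv ℝ ω (E p, L p) (1, 0) with ha
  set b := fderiv ℝ ω (E p, L p) (0, 1) with hb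
  have hωval : ∀ x y : ℝ, fderiv ℝ ω (E p, L p) (x, y) = a * x + b * y := by
    intro x y
    have : (x, y) = x • ((1 : ℝ), (0 : ℝ)) + y • ((0 : ℝ), (1 : ℝ)) := by
      simp [Prod.ext_iff]
    rw [this, map_add, map_smul, map_smul]
    simp [smul_eq_mul, ← ha, ← hb]
    ring
  -- extract scalar equations by applying to basis vectors
  have e1R := congrArg (fun T => T ((1 : ℝ), (0 : ℝ), (0 : ℝ))) hD1
  have e1y := congrArg (fun T => T ((0 : ℝ), (1 : ℝ), (0 : ℝ))) hD1
  have e1z := congrArg (fun T => T ((0 : ℝ), (0 : ℝ), (1 : ℝ))) hD1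
  have e2R := congrArg (fun T => T ((1 : ℝ), (0 : ℝ), (0 : ℝ))) hD2
  have e2y := congrArg (fun T => T ((0 : ℝ), (1 : ℝ), (0 : ℝ))) hD2
  have e2z := congrArg (fun T => T ((0 : ℝ), (0 : ℝ), (1 : ℝ))) hD2
  simp [ContinuousLinearMap.comp_apply, ContinuousLinearMap.prod_apply, hωval] at e1R e1y e1z e2R e2y e2z
  set c := U' R + M / R ^ 2 - L p / R ^ 3 with hc
  have key : (a * ((R ^ 2)⁻¹ * 2⁻¹) + b) * dL (0, 1, 0) = 1 := by
    linear_combination e1y - a * e2y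
  have hne : a * ((R ^ 2)⁻¹ * 2⁻¹) + b ≠ 0 := by
    intro h
    rw [h, zero_mul] at key
    exact zero_ne_one key
  have h3 : (a * ((R ^ 2)⁻¹ * 2⁻¹) + b) * (dL (1, 0, 0) - c * dL (0, 0, 1)) = 0 := by
    linear_combination e1R - a * e2R - c * (e1z - a * e2z)
  have hL1 : dL (1, 0, 0) = c * dL (0, 0, 1) := by
    rcases mul_eq_zero.mp h3 with h | h
    · exact absurd h hne
    · linarith [sub_eq_zero.mp h]
  have hE1 : dE (1, 0, 0) = c * dE (0, 0, 1) := by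
    linear_combination e2R + ((R ^ 2)⁻¹ * 2⁻¹) * hL1 - c * e2z
  rw [hFc.fderiv]
  simp only [ContinuousLinearMap.comp_apply, ContinuousLinearMap.prod_apply]
  rw [hE1, hL1]
  have hsm : ((c * dE (0, 0, 1), c * dL (0, 0, 1)) : ℝ × ℝ)
      = c • ((dE (0, 0, 1), dL (0, 0, 1)) : ℝ × ℝ) := by
    simp [Prod.ext_iff]
  rw [hsm, map_smul, smul_eq_mul]
end

section
/- Let M > 0, let U : (0,∞) → ℝ be differentiable, define Ψ(L,R) = U(R) - M/R + L/(2R²), and let ω : ℝ² → ℝ be differentiable. Let O ⊆ (0,∞) × ℝ² be open and let E, L : O → ℝ be differentiable and satisfy, for every (R,y,z) ∈ O, the constraints ω(E(R,y,z), L(R,y,z)) = y and E(R,y,z) - Ψ(L(R,y,z), R) = z. Let r_• : ℝ → (0,∞) be differentiable and satisfy the critical point equation U'(r_ℓ) + M/r_ℓ² - L/r_ℓ³ |_{L=ℓ} = 0 (i.e. ∂_rΨ(ℓ, r_ℓ) = 0) for every ℓ in the range of L, and define ℰ(R,y,z) := E(R,y,z) - Ψ(L(R,y,z), r_{L(R,y,z)}).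 Then at every (R,y,z) ∈ O the quantity 𝒫ω := ∂_Eω/(2R²) + ∂_Lω, evaluated at (E(R,y,z), L(R,y,z)), satisfies 𝒫ω · ∂_y L(R,y,z) = 1 (in particular 𝒫ω ≠ 0), and ∂_y ℰ(R,y,z) = (1/(2·𝒫ω)) · (1/R² - 1/r_{L(R,y,z)}²). -/
set_option maxHeartbeats 2000000

/-- In the `(R,y,z)` coordinates with constraints `ω(E,L) = y` and
`E - Ψ(L,R) = z` (where `Ψ(L,R) = U(R) - M/R + L/(2R²)`), and with a differentiable
family of critical radii `r_ℓ` satisfying `∂_rΨ(ℓ, r_ℓ) = 0`, the quantity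
`𝒫ω = ∂_Eω/(2R²) + ∂_Lω` satisfies `𝒫ω · ∂_y L = 1` (so `𝒫ω ≠ 0`), and the function
`ℰ = E - Ψ(L, r_L)` satisfies `∂_y ℰ = (1/(2𝒫ω))·(1/R² - 1/r_L²)`. -/
theorem dy_of_calE (M : ℝ) (hM : 0 < M) (U U' : ℝ → ℝ)
    (hU : ∀ r > 0, HasDerivAt U (U' r) r)
    (ω : ℝ × ℝ → ℝ) (hω : Differentiable ℝ ω)
    (O : Set (ℝ × ℝ × ℝ)) (hO : IsOpen O) (hpos : ∀ p ∈ O, 0 < p.1)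
    (E L : ℝ × ℝ × ℝ → ℝ)
    (hE : ∀ p ∈ O, DifferentiableAt ℝ E p) (hL : ∀ p ∈ O, DifferentiableAt ℝ L p)
    (hc₁ : ∀ p ∈ O, ω (E p, L p) = p.2.1)
    (hc₂ : ∀ p ∈ O, E p - (U p.1 - M / p.1 + L p / (2 * p.1 ^ 2)) = p.2.2)
    (r : ℝ → ℝ) (hrpos : ∀ ℓ : ℝ, 0 < r ℓ) (hrdiff : Differentiable ℝ r)
    (hcrit : ∀ p ∈ O, U' (r (L p)) + M / (r (L p)) ^ 2 - L p / (r (L p)) ^ 3 = 0) :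
    ∀ p ∈ O,
      (fderiv ℝ ω (E p, L p) (1, 0) / (2 * p.1 ^ 2) + fderiv ℝ ω (E p, L p) (0, 1)) *
          fderiv ℝ L p (0, 1, 0) = 1 ∧
      (fderiv ℝ ω (E p, L p) (1, 0) / (2 * p.1 ^ 2) + fderiv ℝ ω (E p, L p) (0, 1)) ≠ 0 ∧
      fderiv ℝ
          (fun q => E q - (U (r (L q)) - M / r (L q) + L q / (2 * (r (L q)) ^ 2))) p
          (0, 1, 0) =
        1 / (2 * (fderiv ℝ ω (E p, L p) (1, 0) / (2 * p.1 ^ 2) +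
            fderiv ℝ ω (E p, L p) (0, 1))) * (1 / p.1 ^ 2 - 1 / (r (L p)) ^ 2) := by
  intro p hp
  have hR : 0 < p.1 := hpos p hp
  have hr₀ : 0 < r (L p) := hrpos (L p)
  have hEp : HasFDerivAt E (fderiv ℝ E p) p := (hE p hp).hasFDerivAt
  have hLp : HasFDerivAt L (fderiv ℝ L p) p := (hL p hp).hasFDerivAt
  set DE := fderiv ℝ E p with hDE
  set DL := fderiv ℝ L p with hDL
  set a := DE (0,1,0) with ha
  set b := DL (0,1,0) with hb
  set wE := fderiv ℝ ω (E p, L p) (1,0) with hwE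
  set wL := fderiv ℝ ω (E p, L p) (0,1) with hwL
  have hmem : O ∈ nhds p := hO.mem_nhds hp
  -- projections
  have hproj1 : HasFDerivAt (fun q : ℝ×ℝ×ℝ => q.2.1)
      ((ContinuousLinearMap.fst ℝ ℝ ℝ).comp (ContinuousLinearMap.snd ℝ ℝ (ℝ×ℝ))) p :=
    ((ContinuousLinearMap.fst ℝ ℝ ℝ).comp (ContinuousLinearMap.snd ℝ ℝ (ℝ×ℝ))).hasFDerivAt
  have hproj2 : HasFDerivAt (fun q : ℝ×ℝ×ℝ => q.2.2)
      ((ContinuousLinearMap.snd ℝ ℝ ℝ).comp (ContinuousLinearMap.snd ℝ ℝ (ℝ×ℝ))) p :=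
    ((ContinuousLinearMap.snd ℝ ℝ ℝ).comp (ContinuousLinearMap.snd ℝ ℝ (ℝ×ℝ))).hasFDerivAt
  -- Fact 2 : a = b / (2 R²)
  have hfst : HasFDerivAt (fun q : ℝ×ℝ×ℝ => q.1) (ContinuousLinearMap.fst ℝ ℝ (ℝ×ℝ)) p :=
    hasFDerivAt_fst
  have hU2 : HasFDerivAt (fun q : ℝ×ℝ×ℝ => U q.1)
      (U' p.1 • ContinuousLinearMap.fst ℝ ℝ (ℝ×ℝ)) p :=
    (hU p.1 hR).comp_hasFDerivAt p hfst
  have hMd : HasDerivAt (fun x : ℝ => M / x) ((0 * p.1 - M * 1) / p.1 ^ 2) p.1 :=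
    (hasDerivAt_const p.1 M).div (hasDerivAt_id p.1) hR.ne'
  have hM2 : HasFDerivAt (fun q : ℝ×ℝ×ℝ => M / q.1)
      (((0 * p.1 - M * 1) / p.1 ^ 2) • ContinuousLinearMap.fst ℝ ℝ (ℝ×ℝ)) p :=
    hMd.comp_hasFDerivAt p hfst
  have hDd : HasDerivAt (fun x : ℝ => 2 * x ^ 2) (2 * ((2:ℕ) * p.1 ^ 1 * 1)) p.1 := by
    simpa using (((hasDerivAt_id p.1).pow 2).const_mul 2)
  have hden : HasFDerivAt (fun q : ℝ×ℝ×ℝ => 2 * q.1 ^ 2)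
      ((2 * ((2:ℕ) * p.1 ^ 1 * 1)) • ContinuousLinearMap.fst ℝ ℝ (ℝ×ℝ)) p :=
    hDd.comp_hasFDerivAt p hfst
  have hne : (2 : ℝ) * p.1 ^ 2 ≠ 0 := by positivity
  have hinv : HasDerivAt (fun x : ℝ => (2 * x ^ 2)⁻¹)
      (-(2 * ((2:ℕ) * p.1 ^ 1 * 1)) / (2 * p.1 ^ 2) ^ 2) p.1 := hDd.inv hne
  have hinvF : HasFDerivAt (fun q : ℝ×ℝ×ℝ => (2 * q.1 ^ 2)⁻¹)
      ((-(2 * ((2:ℕ) * p.1 ^ 1 * 1)) / (2 * p.1 ^ 2) ^ 2) • ContinuousLinearMap.fst ℝ ℝ (ℝ×ℝ)) p :=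
    hinv.comp_hasFDerivAt p hfst
  have hdiv := hLp.mul hinvF
  have htotal : HasFDerivAt (fun q : ℝ×ℝ×ℝ => E q - (U q.1 - M / q.1 + L q / (2 * q.1 ^ 2)))
      (DE - (U' p.1 • ContinuousLinearMap.fst ℝ ℝ (ℝ×ℝ) -
        ((0 * p.1 - M * 1) / p.1 ^ 2) • ContinuousLinearMap.fst ℝ ℝ (ℝ×ℝ) +
        (L p • ((-(2 * ((2:ℕ) * p.1 ^ 1 * 1)) / (2 * p.1 ^ 2) ^ 2) • ContinuousLinearMap.fst ℝ ℝ (ℝ×ℝ)) +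
          (2 * p.1 ^ 2)⁻¹ • DL))) p := by
    simpa only [div_eq_mul_inv, Pi.sub_def, Pi.add_def, Pi.mul_def] using hEp.sub ((hU2.sub hM2).add hdiv)
  have heq2 : (fun q : ℝ×ℝ×ℝ => E q - (U q.1 - M / q.1 + L q / (2 * q.1 ^ 2)))
      =ᶠ[nhds p] (fun q : ℝ×ℝ×ℝ => q.2.2) :=
    Filter.eventuallyEq_of_mem hmem hc₂
  have hfd2 := heq2.fderiv_eq (𝕜 := ℝ)
  have hval2 : a - b / (2 * p.1 ^ 2) = 0 := by
    have h := congrFun (congrArg (fun (T : ℝ×ℝ×ℝ →L[ℝ] ℝ) => (T : ℝ×ℝ×ℝ → ℝ))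
      (htotal.fderiv.symm.trans (hfd2.trans hproj2.fderiv))) ((0:ℝ),(1:ℝ),(0:ℝ))
    simp [ContinuousLinearMap.sub_apply, ContinuousLinearMap.add_apply,
      ContinuousLinearMap.smul_apply, smul_eq_mul, ← ha, ← hb] at h
    field_simp at h ⊢
    linarith
  -- Fact 1 : (wE/(2R²) + wL) * b = 1
  have hω1 : HasFDerivAt (fun q : ℝ×ℝ×ℝ => ω (E q, L q))
      ((fderiv ℝ ω (E p, L p)).comp (DE.prod DL)) p :=
    (hω (E p, L p)).hasFDerivAt.comp p (hEp.prodMk hLp)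
  have heq1 : (fun q : ℝ×ℝ×ℝ => ω (E q, L q)) =ᶠ[nhds p] (fun q : ℝ×ℝ×ℝ => q.2.1) :=
    Filter.eventuallyEq_of_mem hmem hc₁
  have hval1 : a * wE + b * wL = 1 := by
    have h := congrFun (congrArg (fun (T : ℝ×ℝ×ℝ →L[ℝ] ℝ) => (T : ℝ×ℝ×ℝ → ℝ))
      (hω1.fderiv.symm.trans ((heq1.fderiv_eq (𝕜 := ℝ)).trans hproj1.fderiv))) ((0:ℝ),(1:ℝ),(0:ℝ))
    simp only [ContinuousLinearMap.comp_apply, ContinuousLinearMap.prod_apply,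
      ContinuousLinearMap.coe_comp', Function.comp_apply, ContinuousLinearMap.coe_fst',
      ContinuousLinearMap.coe_snd'] at h
    have hab : ((DE (0,1,0), DL (0,1,0)) : ℝ × ℝ) = a • ((1:ℝ),(0:ℝ)) + b • ((0:ℝ),(1:ℝ)) := by
      simp [ha, hb]
    rw [hab, map_add, map_smul, map_smul, smul_eq_mul, smul_eq_mul] at h
    exact h
  have key1 : (wE / (2 * p.1 ^ 2) + wL) * b = 1 := by
    have hR2 : (2 : ℝ) * p.1 ^ 2 ≠ 0 := hne
    have haval : a = b / (2 * p.1 ^ 2) := by linarith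
    field_simp [haval] at hval1 ⊢
    have h' : b = a * (2 * p.1 ^ 2) := by rw [haval, div_mul_cancel₀ _ hR2]
    linear_combination (2 * p.1 ^ 2) * hval1 + wE * h'
  have key2 : wE / (2 * p.1 ^ 2) + wL ≠ 0 := left_ne_zero_of_mul_eq_one key1
  refine ⟨key1, key2, ?_⟩
  -- Fact 3
  set ℓ₀ := L p with hl0
  set r₀ := r ℓ₀ with hr0def
  set r' := deriv r ℓ₀ with hr'
  have hrd : HasDerivAt r r' ℓ₀ := (hrdiff ℓ₀).hasDerivAt
  have h1 : HasDerivAt (fun ℓ => U (r ℓ)) (U' r₀ * r') ℓ₀ := (hU r₀ hr₀).comp ℓ₀ hrd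
  have h2 : HasDerivAt (fun ℓ => M / r ℓ) ((0 * r₀ - M * r') / r₀ ^ 2) ℓ₀ :=
    (hasDerivAt_const ℓ₀ M).div hrd hr₀.ne'
  have h3d : HasDerivAt (fun ℓ => 2 * r ℓ ^ 2) (2 * ((2:ℕ) * r₀ ^ 1 * r')) ℓ₀ :=
    (hrd.pow 2).const_mul 2
  have h3 : HasDerivAt (fun ℓ => ℓ / (2 * r ℓ ^ 2))
      ((1 * (2 * r₀ ^ 2) - ℓ₀ * (2 * ((2:ℕ) * r₀ ^ 1 * r'))) / (2 * r₀ ^ 2) ^ 2) ℓ₀ :=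
    (hasDerivAt_id ℓ₀).div h3d (by positivity)
  have hU'val : U' r₀ = ℓ₀ / r₀ ^ 3 - M / r₀ ^ 2 := by
    have := hcrit p hp; rw [← hl0, ← hr0def] at this; linarith
  have hDval : U' r₀ * r' - (0 * r₀ - M * r') / r₀ ^ 2 +
      (1 * (2 * r₀ ^ 2) - ℓ₀ * (2 * ((2:ℕ) * r₀ ^ 1 * r'))) / (2 * r₀ ^ 2) ^ 2
      = 1 / (2 * r₀ ^ 2) := by
    rw [hU'val]; field_simp; ring
  have hΦ : HasDerivAt (fun ℓ => U (r ℓ) - M / r ℓ + ℓ / (2 * r ℓ ^ 2)) (1 / (2 * r₀ ^ 2)) ℓ₀ :=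
    hDval ▸ ((h1.sub h2).add h3)
  have hΦL : HasFDerivAt (fun q : ℝ×ℝ×ℝ => U (r (L q)) - M / r (L q) + L q / (2 * r (L q) ^ 2))
      ((1 / (2 * r₀ ^ 2)) • DL) p := hΦ.comp_hasFDerivAt p hLp
  have hkey : fderiv ℝ (fun q => E q - (U (r (L q)) - M / r (L q) + L q / (2 * r (L q) ^ 2))) p
      = DE - (1 / (2 * r₀ ^ 2)) • DL := (hEp.sub hΦL).fderiv
  rw [hkey]
  have : (DE - (1 / (2 * r₀ ^ 2)) • DL) ((0:ℝ),(1:ℝ),(0:ℝ)) = a - 1 / (2 * r₀ ^ 2) * b := by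
    simp [ha, hb]
  rw [this]
  have haval : a = b / (2 * p.1 ^ 2) := by linarith
  rw [haval]
  have hRne : p.1 ≠ 0 := hR.ne'
  have hr₀ne : r₀ ≠ 0 := hr₀.ne'
  have hPne : wE + wL * (2 * p.1 ^ 2) ≠ 0 := by
    intro h
    apply key2
    field_simp
    linarith
  have key1' : (wE + wL * (2 * p.1 ^ 2)) * b = 2 * p.1 ^ 2 := by
    have := key1
    field_simp at this
    linarith
  have hb' : b = 1 / (wE / (2 * p.1 ^ 2) + wL) := by rw [eq_div_iff key2]; linarith [key1]
  rw [hb']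
  generalize wE / (2 * p.1 ^ 2) + wL = P
  ring
end
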